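/- arXiv:2002.03432 — 4 statements merged into one kernel-verified Lean document; each statement's English description precedes it below -/
import Mathlib

section
/- Let L : ℝⁿ → ℝ be continuously differentiable, with parameters partitioned into L groups W = (W₁,...,W_L) and perturbation ΔW = (ΔW₁,...,ΔW_L). Writing g_l(W) for the gradient of L with respect to the l-th group, and cos θ_l := ⟨-g_l(W), ΔW_l⟩ / (‖g_l(W)‖·‖ΔW_l‖) (with g_l(W) ≠ 0, ΔW_l ≠ 0), we have: L(W+ΔW) - L(W) ≤ - Σ_{l=1}^L ‖g_l(W)‖ ‖ΔW_l‖ [cos θ_l - max_{t∈[0,1]} ‖g_l(W+tΔW) - g_l(W)‖ / ‖g_l(W)‖]. -/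
open Finset

/-- A descent lemma via the fundamental theorem of calculus (Lemma 1):
the parameters are partitioned into `L` groups, `g_l(W)` is the gradient of the loss
with respect to the `l`-th group, and `cos θ_l = ⟪-g_l(W), ΔW_l⟫/(‖g_l(W)‖‖ΔW_l‖)`. -/
theorem descent_lemma_ftc {L : ℕ} {d : Fin L → ℕ}
    (f : PiLp 2 (fun l : Fin L => EuclideanSpace ℝ (Fin (d l))) → ℝ)
    (hf : ContDiff ℝ 1 f)
    (W ΔW : PiLp 2 (fun l : Fin L => EuclideanSpace ℝ (Fin (d l))))
    (hg : ∀ l, gradient f W l ≠ 0) (hΔ : ∀ l, ΔW l ≠ 0) :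
    f (W + ΔW) - f W ≤
      - ∑ l, ‖gradient f W l‖ * ‖ΔW l‖ *
        ((inner ℝ (-(gradient f W l)) (ΔW l) : ℝ) / (‖gradient f W l‖ * ‖ΔW l‖)
          - ⨆ t : Set.Icc (0 : ℝ) 1,
              ‖gradient f (W + (t : ℝ) • ΔW) l - gradient f W l‖ / ‖gradient f W l‖) := by
  classical
  have hfd : Differentiable ℝ f := hf.differentiable one_ne_zero
  -- continuity of the gradient
  have hgc : Continuous (gradient f) := by
    have h1 : Continuous (fderiv ℝ f) := hf.continuous_fderiv one_ne_zero
    exact (LinearIsometryEquiv.continuous _).comp h1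
  set g : PiLp 2 (fun l : Fin L => EuclideanSpace ℝ (Fin (d l))) := gradient f W with hgdef
  -- the curve
  set G : ℝ → PiLp 2 (fun l : Fin L => EuclideanSpace ℝ (Fin (d l))) := fun t => gradient f (W + t • ΔW) with hGdef
  have hGc : Continuous G := hgc.comp (by continuity)
  -- derivative of φ
  have hφ : ∀ t : ℝ, HasDerivAt (fun s : ℝ => f (W + s • ΔW)) (inner ℝ (G t) ΔW : ℝ) t := by
    intro t
    have hline : HasDerivAt (fun s : ℝ => W + s • ΔW) ΔW t := by
      simpa using ((hasDerivAt_id t).smul_const ΔW).const_add W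
    have hgr : HasGradientAt f (G t) (W + t • ΔW) :=
      (hfd (W + t • ΔW)).hasGradientAt
    have := hgr.hasFDerivAt.comp_hasDerivAt t hline
    simp [InnerProductSpace.toDual] at this; exact this
  -- FTC
  have hint : IntervalIntegrable (fun t : ℝ => (inner ℝ (G t) ΔW : ℝ)) MeasureTheory.volume 0 1 :=
    (Continuous.intervalIntegrable (by exact (continuous_inner.comp (hGc.prodMk continuous_const)))) 0 1
  have hFTC : (∫ t in (0:ℝ)..1, (inner ℝ (G t) ΔW : ℝ)) = f (W + ΔW) - f W := by
    have := intervalIntegral.integral_eq_sub_of_hasDerivAt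
      (f := fun s : ℝ => f (W + s • ΔW)) (f' := fun t => (inner ℝ (G t) ΔW : ℝ))
      (fun t _ => hφ t) hint
    simpa using this
  -- sup quantities
  set T : Fin L → ℝ := fun l => ⨆ t : Set.Icc (0:ℝ) 1, ‖G t l - g l‖ / ‖g l‖ with hTdef
  have hbdd : ∀ l, BddAbove (Set.range fun t : Set.Icc (0:ℝ) 1 => ‖G t l - g l‖ / ‖g l‖) := by
    intro l
    have hc : Continuous (fun t : ℝ => ‖G t l - g l‖ / ‖g l‖) := by
      apply Continuous.div_const
      exact (Continuous.sub ((PiLp.continuous_apply 2 _ l).comp hGc) continuous_const).norm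
    have hr : (Set.range fun t : Set.Icc (0:ℝ) 1 => ‖G t l - g l‖ / ‖g l‖)
        = (fun t : ℝ => ‖G t l - g l‖ / ‖g l‖) '' Set.Icc 0 1 := by
      ext y; simp [Set.restrict]
    rw [hr]
    exact (isCompact_Icc.image hc).bddAbove
  -- bound the integrand pointwise
  set C : ℝ := ∑ l, ((inner ℝ (g l) (ΔW l) : ℝ) + T l * (‖g l‖ * ‖ΔW l‖)) with hCdef
  have hbound : ∀ t ∈ Set.Icc (0:ℝ) 1, (inner ℝ (G t) ΔW : ℝ) ≤ C := by
    intro t ht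
    have hinner : (inner ℝ (G t) ΔW : ℝ) = ∑ l, (inner ℝ (G t l) (ΔW l) : ℝ) := by
      exact PiLp.inner_apply (G t) ΔW
    rw [hinner, hCdef]
    apply Finset.sum_le_sum
    intro l _
    have h1 : (inner ℝ (G t l) (ΔW l) : ℝ)
        = (inner ℝ (g l) (ΔW l) : ℝ) + (inner ℝ (G t l - g l) (ΔW l) : ℝ) := by
      rw [inner_sub_left]; ring
    rw [h1]
    have h2 : (inner ℝ (G t l - g l) (ΔW l) : ℝ) ≤ ‖G t l - g l‖ * ‖ΔW l‖ :=
      real_inner_le_norm _ _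
    have hgl : (0:ℝ) < ‖g l‖ := norm_pos_iff.mpr (hg l)
    have h3 : ‖G t l - g l‖ / ‖g l‖ ≤ T l :=
      le_ciSup (hbdd l) (⟨t, ht⟩ : Set.Icc (0:ℝ) 1)
    have h4 : ‖G t l - g l‖ ≤ T l * ‖g l‖ := by
      rw [div_le_iff₀ hgl] at h3; exact h3
    have h5 : ‖G t l - g l‖ * ‖ΔW l‖ ≤ T l * (‖g l‖ * ‖ΔW l‖) := by
      have := mul_le_mul_of_nonneg_right h4 (norm_nonneg (ΔW l))
      linarith [this]
    linarith
  -- integrate the bound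
  have hconst : IntervalIntegrable (fun _ : ℝ => C) MeasureTheory.volume 0 1 :=
    intervalIntegrable_const
  have hle : f (W + ΔW) - f W ≤ C := by
    rw [← hFTC]
    calc (∫ t in (0:ℝ)..1, (inner ℝ (G t) ΔW : ℝ)) ≤ ∫ _ in (0:ℝ)..1, C :=
          intervalIntegral.integral_mono_on (by norm_num) hint hconst hbound
      _ = C := by simp
  refine hle.trans_eq ?_
  rw [hCdef, ← Finset.sum_neg_distrib]
  apply Finset.sum_congr rfl
  intro l _
  have hgl : (0:ℝ) < ‖g l‖ := norm_pos_iff.mpr (hg l)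
  have hΔl : (0:ℝ) < ‖ΔW l‖ := norm_pos_iff.mpr (hΔ l)
  rw [inner_neg_left]
  field_simp
  ring
end

section
/- Let L : ℝⁿ → ℝ be continuously differentiable with parameters in L groups, and suppose the deep relative trust bound holds: for every group l and every perturbation ΔW, ‖g_l(W+ΔW) - g_l(W)‖/‖g_l(W)‖ ≤ ∏_{k=1}^L (1 + ‖ΔW_k‖/‖W_k‖) - 1. If a perturbation ΔW satisfies ‖ΔW_l‖/‖W_l‖ ≤ η for all l, each ΔW_l is nonzero with angle θ_l to -g_l(W), each g_l(W) ≠ 0, and η < (1 + cos θ_l)^{1/L} - 1 for all l, then L(W+ΔW) < L(W). -/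
open Finset

set_option maxHeartbeats 1000000 in
/-- Descent under deep relative trust (Lemma 2): if the gradient breakdown obeys the
deep relative trust bound, the perturbation has layerwise relative size at most `η`, and
`η < (1 + cos θ_l)^{1/L} - 1` for every layer, then the loss strictly decreases. -/
theorem descent_under_deep_relative_trust {L : ℕ} (hL : 0 < L) {d : Fin L → ℕ}
    (f : PiLp 2 (fun l : Fin L => EuclideanSpace ℝ (Fin (d l))) → ℝ)
    (hf : ContDiff ℝ 1 f)
    (W ΔW : PiLp 2 (fun l : Fin L => EuclideanSpace ℝ (Fin (d l))))
    (η : ℝ)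
    (hW : ∀ l, W l ≠ 0)
    (hg : ∀ l, gradient f W l ≠ 0)
    (hΔ : ∀ l, ΔW l ≠ 0)
    (htrust : ∀ (ΔV : PiLp 2 (fun l : Fin L => EuclideanSpace ℝ (Fin (d l)))) (l : Fin L),
      ‖gradient f (W + ΔV) l - gradient f W l‖ / ‖gradient f W l‖ ≤
        (∏ k, (1 + ‖ΔV k‖ / ‖W k‖)) - 1)
    (hsize : ∀ l, ‖ΔW l‖ / ‖W l‖ ≤ η)
    (hη : ∀ l, η <
      (1 + (inner ℝ (-(gradient f W l)) (ΔW l) : ℝ) / (‖gradient f W l‖ * ‖ΔW l‖))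
        ^ ((1 : ℝ) / L) - 1) :
    f (W + ΔW) < f W := by
  haveI : Nonempty (Fin L) := ⟨⟨0, hL⟩⟩
  set g := gradient f W with hgdef
  -- positivity basics
  have hgl : ∀ l, (0:ℝ) < ‖g l‖ := fun l => norm_pos_iff.mpr (hg l)
  have hΔl : ∀ l, (0:ℝ) < ‖ΔW l‖ := fun l => norm_pos_iff.mpr (hΔ l)
  have hWl : ∀ l, (0:ℝ) < ‖W l‖ := fun l => norm_pos_iff.mpr (hW l)
  have hη0 : 0 < η := by
    have l0 : Fin L := ⟨0, hL⟩
    exact lt_of_lt_of_le (div_pos (hΔl l0) (hWl l0)) (hsize l0)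
  -- cosines
  set c : Fin L → ℝ := fun l =>
    (inner ℝ (-(g l)) (ΔW l) : ℝ) / (‖g l‖ * ‖ΔW l‖) with hc
  have hNpos : ∀ l, (0:ℝ) < ‖g l‖ * ‖ΔW l‖ := fun l => mul_pos (hgl l) (hΔl l)
  have hc1 : ∀ l, (0:ℝ) ≤ 1 + c l := by
    intro l
    have h1 : (inner ℝ (g l) (ΔW l) : ℝ) ≤ ‖g l‖ * ‖ΔW l‖ := real_inner_le_norm _ _
    have h2 : (inner ℝ (-(g l)) (ΔW l) : ℝ) = -(inner ℝ (g l) (ΔW l) : ℝ) := by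
      rw [inner_neg_left]
    have : -(‖g l‖ * ‖ΔW l‖) ≤ (inner ℝ (-(g l)) (ΔW l) : ℝ) := by
      rw [h2]; linarith
    have hcge : (-1:ℝ) ≤ c l := by
      rw [hc]
      rw [le_div_iff₀ (hNpos l)]
      simpa using ‹-(‖g l‖ * ‖ΔW l‖) ≤ (inner ℝ (-(g l)) (ΔW l) : ℝ)›
    linarith
  -- key per-layer inequality
  have hkey : ∀ l, (1 + η) ^ L - 1 < c l := by
    intro l
    have h := hη l
    have h' : 1 + η < (1 + c l) ^ ((1:ℝ)/L) := by
      rw [hc]; linarith [hη l]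
    have hb : (0:ℝ) ≤ 1 + η := by linarith
    have hpow : (1 + η) ^ L < ((1 + c l) ^ ((1:ℝ)/L)) ^ L :=
      pow_lt_pow_left₀ h' hb hL.ne'
    have heq : ((1 + c l) ^ ((1:ℝ)/L)) ^ L = 1 + c l := by
      rw [← Real.rpow_natCast ((1 + c l) ^ ((1:ℝ)/L)) L, ← Real.rpow_mul (hc1 l),
        one_div_mul_cancel (by exact_mod_cast hL.ne' : (L:ℝ) ≠ 0), Real.rpow_one]
    rw [heq] at hpow
    linarith
  -- the constant bound C
  set C : ℝ := ∑ l, (‖g l‖ * ‖ΔW l‖ * ((1 + η) ^ L - 1) + (inner ℝ (g l) (ΔW l) : ℝ)) with hC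
  have hCneg : C < 0 := by
    have hterm : ∀ l : Fin L,
        ‖g l‖ * ‖ΔW l‖ * ((1 + η) ^ L - 1) + (inner ℝ (g l) (ΔW l) : ℝ) < 0 := by
      intro l
      have hinner : (inner ℝ (g l) (ΔW l) : ℝ) = -(c l * (‖g l‖ * ‖ΔW l‖)) := by
        have h0 : c l * (‖g l‖ * ‖ΔW l‖) = (inner ℝ (-(g l)) (ΔW l) : ℝ) :=
          div_mul_cancel₀ _ (hNpos l).ne'
        rw [inner_neg_left] at h0
        linarith
      rw [hinner]
      have := hkey l
      nlinarith [hNpos l]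
    calc C < ∑ _l : Fin L, (0:ℝ) :=
          Finset.sum_lt_sum_of_nonempty univ_nonempty (fun l _ => hterm l)
      _ = 0 := by simp
  -- derivative machinery
  have hdiff : Differentiable ℝ f := hf.differentiable one_ne_zero
  have hgc : Continuous (fun y => gradient f y) :=
    (InnerProductSpace.toDual ℝ _).symm.continuous.comp (hf.continuous_fderiv one_ne_zero)
  have hfd : ∀ (x v : PiLp 2 (fun l : Fin L => EuclideanSpace ℝ (Fin (d l)))), fderiv ℝ f x v = (inner ℝ (gradient f x) v : ℝ) := by
    intro x v
    have h1 : HasGradientAt f (gradient f x) x := (hdiff x).hasGradientAt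
    rw [hasGradientAt_iff_hasFDerivAt] at h1
    rw [h1.fderiv]
    simp [InnerProductSpace.toDual_apply_apply]
  set ψ : ℝ → ℝ := fun t => (inner ℝ (gradient f (W + t • ΔW)) ΔW : ℝ) with hψ
  have hψcont : Continuous ψ := by
    apply Continuous.inner
    · exact hgc.comp (continuous_const.add (continuous_id.smul continuous_const))
    · exact continuous_const
  have hφ : ∀ t : ℝ, HasDerivAt (fun s => f (W + s • ΔW)) (ψ t) t := by
    intro t
    have hline : HasDerivAt (fun s : ℝ => W + s • ΔW) ΔW t := by
      simpa using ((hasDerivAt_id t).smul_const ΔW).const_add W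
    have := (hdiff (W + t • ΔW)).hasFDerivAt.comp_hasDerivAt t hline
    rw [hfd] at this
    exact this
  have hFTC : ∫ t in (0:ℝ)..1, ψ t = f (W + ΔW) - f W := by
    have := intervalIntegral.integral_eq_sub_of_hasDerivAt
      (f := fun s => f (W + s • ΔW)) (f' := ψ)
      (fun t _ => hφ t) (hψcont.intervalIntegrable 0 1)
    simpa using this
  -- pointwise bound ψ t ≤ C on [0,1]
  have hbound : ∀ t ∈ Set.Icc (0:ℝ) 1, ψ t ≤ C := by
    intro t ht
    have hGg : ∀ l, ‖gradient f (W + t • ΔW) l - g l‖ ≤ ‖g l‖ * ((1 + η) ^ L - 1) := by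
      intro l
      have h1 := htrust (t • ΔW) l
      have hprod : (∏ k, (1 + ‖(t • ΔW) k‖ / ‖W k‖)) ≤ (1 + η) ^ L := by
        calc (∏ k, (1 + ‖(t • ΔW) k‖ / ‖W k‖)) ≤ ∏ _k : Fin L, (1 + η) := by
              apply Finset.prod_le_prod
              · intro k _
                positivity
              · intro k _
                have : ‖(t • ΔW) k‖ = |t| * ‖ΔW k‖ := by
                  simp [norm_smul]
                rw [this]
                have habs : |t| ≤ 1 := by
                  rw [abs_le]; constructor <;> [linarith [ht.1]; exact ht.2]
                have h5 : |t| * ‖ΔW k‖ ≤ ‖ΔW k‖ := by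
                  nlinarith [abs_nonneg t, norm_nonneg (ΔW k)]
                have h6 : |t| * ‖ΔW k‖ / ‖W k‖ ≤ ‖ΔW k‖ / ‖W k‖ :=
                  (div_le_div_iff_of_pos_right (hWl k)).mpr h5
                linarith [hsize k]
          _ = (1 + η) ^ L := by
              simp [Finset.prod_const, Finset.card_univ]
      have h2 : ‖gradient f (W + t • ΔW) l - g l‖ / ‖g l‖ ≤ (1 + η) ^ L - 1 := by
        calc _ ≤ _ := h1
          _ ≤ (1 + η) ^ L - 1 := by linarith
      calc ‖gradient f (W + t • ΔW) l - g l‖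
          = (‖gradient f (W + t • ΔW) l - g l‖ / ‖g l‖) * ‖g l‖ :=
            (div_mul_cancel₀ _ (hgl l).ne').symm
        _ ≤ ((1 + η) ^ L - 1) * ‖g l‖ := by
            apply mul_le_mul_of_nonneg_right h2 (hgl l).le
        _ = ‖g l‖ * ((1 + η) ^ L - 1) := by ring
    -- expand inner product over layers
    have hexp : ψ t = ∑ l, (inner ℝ (gradient f (W + t • ΔW) l) (ΔW l) : ℝ) := by
      rw [hψ]
      exact PiLp.inner_apply _ _
    rw [hexp, hC]
    apply Finset.sum_le_sum
    intro l _
    have hsplit : (inner ℝ (gradient f (W + t • ΔW) l) (ΔW l) : ℝ)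
        = (inner ℝ (gradient f (W + t • ΔW) l - g l) (ΔW l) : ℝ) + (inner ℝ (g l) (ΔW l) : ℝ) := by
      rw [inner_sub_left]; ring
    rw [hsplit]
    have h3 : (inner ℝ (gradient f (W + t • ΔW) l - g l) (ΔW l) : ℝ)
        ≤ ‖gradient f (W + t • ΔW) l - g l‖ * ‖ΔW l‖ := real_inner_le_norm _ _
    have h4 := mul_le_mul_of_nonneg_right (hGg l) (hΔl l).le
    nlinarith [hGg l, (hΔl l).le]
  -- combine
  have hint : ∫ t in (0:ℝ)..1, ψ t ≤ ∫ _t in (0:ℝ)..1, C := by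
    apply intervalIntegral.integral_mono_on zero_le_one
      (hψcont.intervalIntegrable 0 1) (intervalIntegrable_const) hbound
  have : f (W + ΔW) - f W ≤ C := by
    rw [← hFTC]
    simpa using hint
  linarith
end

section
/- Consider an L-layer multilayer perceptron f(x) = φ(W_L φ(W_{L-1} ⋯ φ(W_1 x))) and a perturbed network f̃ with weights W̃_l = W_l + ΔW_l. Suppose φ satisfies α‖x‖₂ ≤ ‖φ(x)‖₂ ≤ β‖x‖₂ and α‖x-y‖₂ ≤ ‖φ(x)-φ(y)‖₂ ≤ β‖x-y‖₂ for all x, y, with 0 < α ≤ β, and all matrices W_l, W̃_l, ΔW_l have condition number at most κ with smallest singular value positive. Then for all nonzero x with f(x) ≠ 0: ‖f̃(x) - f(x)‖₂ / ‖f(x)‖₂ ≤ (β κ²/α)^L · [∏_{k=1}^L (1 + ‖ΔW_k‖_F/‖W_k‖_F) - 1]. -/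
open Finset

/-- Euclidean norm of a vector. -/
noncomputable def vecEnorm {m : ℕ} (v : Fin m → ℝ) : ℝ :=
  Real.sqrt (∑ i, v i ^ 2)

/-- Frobenius norm of a matrix. -/
noncomputable def frob {a b : ℕ} (M : Matrix (Fin a) (Fin b) ℝ) : ℝ :=
  Real.sqrt (∑ i, ∑ j, M i j ^ 2)

/-- `M` has all singular values positive and condition number (ratio of largest to
smallest singular value) at most `κ`. -/
def HasCondLE {a b : ℕ} (M : Matrix (Fin a) (Fin b) ℝ) (κ : ℝ) : Prop :=
  ∃ σmin σmax : ℝ, 0 < σmin ∧ σmax ≤ κ * σmin ∧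
    ∀ v : Fin b → ℝ, σmin * vecEnorm v ≤ vecEnorm (M.mulVec v) ∧
      vecEnorm (M.mulVec v) ≤ σmax * vecEnorm v

/-- Hidden layers of a multilayer perceptron:
`h 0 x = x`, `h (l+1) x = φ(W l · h l x)` with `φ` applied elementwise. -/
noncomputable def mlpHidden (φ : ℝ → ℝ) (n : ℕ → ℕ)
    (W : ∀ l : ℕ, Matrix (Fin (n (l + 1))) (Fin (n l)) ℝ)
    (x : Fin (n 0) → ℝ) : ∀ l : ℕ, Fin (n l) → ℝ
  | 0 => x
  | l + 1 => fun i => φ ((W l).mulVec (mlpHidden φ n W x l) i)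

lemma vecEnorm_nonneg' {m : ℕ} (v : Fin m → ℝ) : 0 ≤ vecEnorm v := Real.sqrt_nonneg _

lemma vecEnorm_sq' {m : ℕ} (v : Fin m → ℝ) : vecEnorm v ^ 2 = ∑ i, v i ^ 2 :=
  Real.sq_sqrt (by positivity)

lemma vecEnorm_pos' {m : ℕ} {v : Fin m → ℝ} (h : v ≠ 0) : 0 < vecEnorm v := by
  obtain ⟨i, hi⟩ := Function.ne_iff.mp h
  apply Real.sqrt_pos.mpr
  apply Finset.sum_pos' (fun i _ => by positivity) ⟨i, Finset.mem_univ i, by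
    have : v i ≠ 0 := hi
    positivity⟩

lemma vecEnorm_le_mul {m : ℕ} {a b : Fin m → ℝ} {c : ℝ} (hc : 0 ≤ c)
    (h : ∀ i, |a i| ≤ c * |b i|) : vecEnorm a ≤ c * vecEnorm b := by
  unfold vecEnorm
  have h1 : ∑ i, a i ^ 2 ≤ c ^ 2 * ∑ i, b i ^ 2 := by
    rw [Finset.mul_sum]
    refine Finset.sum_le_sum fun i _ => ?_
    have := h i
    nlinarith [abs_nonneg (a i), abs_nonneg (b i), sq_abs (a i), sq_abs (b i)]
  calc Real.sqrt (∑ i, a i ^ 2) ≤ Real.sqrt (c ^ 2 * ∑ i, b i ^ 2) :=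
        Real.sqrt_le_sqrt h1
    _ = c * Real.sqrt (∑ i, b i ^ 2) := by
        rw [Real.sqrt_mul (by positivity), Real.sqrt_sq hc]

lemma mul_le_vecEnorm {m : ℕ} {a b : Fin m → ℝ} {c : ℝ} (hc : 0 ≤ c)
    (h : ∀ i, c * |b i| ≤ |a i|) : c * vecEnorm b ≤ vecEnorm a := by
  unfold vecEnorm
  have h1 : c ^ 2 * ∑ i, b i ^ 2 ≤ ∑ i, a i ^ 2 := by
    rw [Finset.mul_sum]
    refine Finset.sum_le_sum fun i _ => ?_
    have := h i
    nlinarith [abs_nonneg (a i), abs_nonneg (b i), sq_abs (a i), sq_abs (b i),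
      mul_self_le_mul_self (mul_nonneg hc (abs_nonneg (b i))) this]
  calc c * Real.sqrt (∑ i, b i ^ 2) = Real.sqrt (c ^ 2 * ∑ i, b i ^ 2) := by
        rw [Real.sqrt_mul (by positivity), Real.sqrt_sq hc]
    _ ≤ Real.sqrt (∑ i, a i ^ 2) := Real.sqrt_le_sqrt h1

lemma vecEnorm_eq_norm' {m : ℕ} (v : Fin m → ℝ) :
    vecEnorm v = ‖(WithLp.equiv 2 (Fin m → ℝ)).symm v‖ := by
  rw [EuclideanSpace.norm_eq]; simp [vecEnorm, sq_abs]

lemma vecEnorm_add_le' {m : ℕ} (u v : Fin m → ℝ) :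
    vecEnorm (u + v) ≤ vecEnorm u + vecEnorm v := by
  rw [vecEnorm_eq_norm', vecEnorm_eq_norm', vecEnorm_eq_norm']
  exact norm_add_le _ _

lemma vecEnorm_single' {m : ℕ} (j : Fin m) : vecEnorm (Pi.single j (1:ℝ)) = 1 := by
  simp [vecEnorm, Pi.single_apply]

lemma frob_nonneg' {a b : ℕ} (M : Matrix (Fin a) (Fin b) ℝ) : 0 ≤ frob M :=
  Real.sqrt_nonneg _

lemma frob_sq' {a b : ℕ} (M : Matrix (Fin a) (Fin b) ℝ) :
    frob M ^ 2 = ∑ j, ∑ i, M i j ^ 2 := by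
  rw [frob, Real.sq_sqrt (by positivity), Finset.sum_comm]

/-- Column bounds from the singular-value bounds. -/
lemma frob_bounds {a b : ℕ} {M : Matrix (Fin a) (Fin b) ℝ} {σm σM : ℝ}
    (hσm : 0 ≤ σm) (hσM : 0 ≤ σM)
    (hb : ∀ v, σm * vecEnorm v ≤ vecEnorm (M.mulVec v) ∧ vecEnorm (M.mulVec v) ≤ σM * vecEnorm v) :
    (b : ℝ) * σm ^ 2 ≤ frob M ^ 2 ∧ frob M ^ 2 ≤ (b : ℝ) * σM ^ 2 := by
  have hcol : ∀ j : Fin b, σm ^ 2 ≤ ∑ i, M i j ^ 2 ∧ ∑ i, M i j ^ 2 ≤ σM ^ 2 := by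
    intro j
    have h1 := hb (Pi.single j 1)
    rw [vecEnorm_single', mul_one, mul_one] at h1
    have hcol : M.mulVec (Pi.single j 1) = fun i => M i j := by
      rw [Matrix.mulVec_single]; simp; rfl
    rw [hcol] at h1
    have hsq : vecEnorm (fun i => M i j) ^ 2 = ∑ i, M i j ^ 2 := vecEnorm_sq' _
    constructor
    · nlinarith [vecEnorm_nonneg' (fun i => M i j),
        mul_self_le_mul_self hσm h1.1]
    · nlinarith [vecEnorm_nonneg' (fun i => M i j),
        mul_self_le_mul_self (vecEnorm_nonneg' (fun i => M i j)) h1.2]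
  rw [frob_sq']
  have e1 : ∑ _j : Fin b, σm ^ 2 = (b : ℝ) * σm ^ 2 := by
    simp [Finset.sum_const, Finset.card_univ, nsmul_eq_mul]
  have e2 : ∑ _j : Fin b, σM ^ 2 = (b : ℝ) * σM ^ 2 := by
    simp [Finset.sum_const, Finset.card_univ, nsmul_eq_mul]
  constructor
  · rw [← e1]; exact Finset.sum_le_sum fun j _ => (hcol j).1
  · rw [← e2]; exact Finset.sum_le_sum fun j _ => (hcol j).2

set_option maxHeartbeats 1600000 in
/-- Theorem 1(a): relative functional difference of a multilayer perceptron. -/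
theorem mlp_relative_functional_difference
    (L : ℕ) (hL : 0 < L) (n : ℕ → ℕ) (φ : ℝ → ℝ) (α β κ : ℝ)
    (hα : 0 < α) (hαβ : α ≤ β)
    (hφ1 : ∀ x : ℝ, α * |x| ≤ |φ x| ∧ |φ x| ≤ β * |x|)
    (hφ2 : ∀ x y : ℝ, α * |x - y| ≤ |φ x - φ y| ∧ |φ x - φ y| ≤ β * |x - y|)
    (W ΔW : ∀ l : ℕ, Matrix (Fin (n (l + 1))) (Fin (n l)) ℝ)
    (hcond : ∀ l < L, HasCondLE (W l) κ ∧ HasCondLE (W l + ΔW l) κ ∧ HasCondLE (ΔW l) κ)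
    (x : Fin (n 0) → ℝ) (hx : x ≠ 0) (hfx : mlpHidden φ n W x L ≠ 0) :
    vecEnorm (mlpHidden φ n (fun l => W l + ΔW l) x L - mlpHidden φ n W x L) /
        vecEnorm (mlpHidden φ n W x L) ≤
      (β * κ ^ 2 / α) ^ L *
        ((∏ k ∈ Finset.range L, (1 + frob (ΔW k) / frob (W k))) - 1) := by
  have hβ : 0 < β := lt_of_lt_of_le hα hαβ
  set c : ℝ := β * κ ^ 2 / α with hcdef
  set g := mlpHidden φ n (fun l => W l + ΔW l) x with hgdef
  set h := mlpHidden φ n W x with hhdef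
  have key : ∀ l, l ≤ L → h l ≠ 0 ∧
      vecEnorm (g l - h l) ≤
        c ^ l * ((∏ k ∈ Finset.range l, (1 + frob (ΔW k) / frob (W k))) - 1) *
          vecEnorm (h l) := by
    intro l
    induction l with
    | zero =>
      intro _
      refine ⟨hx, ?_⟩
      have : g 0 - h 0 = 0 := by
        show x - x = 0
        simp
      rw [this]
      simp [vecEnorm]
    | succ l ih =>
      intro hlL
      have hl : l < L := Nat.lt_of_succ_le hlL
      obtain ⟨hhl, hD⟩ := ih (Nat.le_of_succ_le hlL)
      obtain ⟨⟨sm, sM, hsm, hsMκ, hWb⟩, -, ⟨dm, dM, hdm, hdMκ, hΔb⟩⟩ := hcond l hl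
      -- nonemptiness of the layer
      obtain ⟨i0, hi0⟩ := Function.ne_iff.mp hhl
      -- κ ≥ 1
      have hsmM : sm ≤ sM := by
        have h1 := hWb (Pi.single i0 1)
        rw [vecEnorm_single', mul_one, mul_one] at h1
        linarith [h1.1, h1.2]
      have hκ : 1 ≤ κ := by nlinarith
      have hsM0 : 0 ≤ sM := le_of_lt (lt_of_lt_of_le hsm hsmM)
      have hdmM : dm ≤ dM := by
        have h1 := hΔb (Pi.single i0 1)
        rw [vecEnorm_single', mul_one, mul_one] at h1
        linarith [h1.1, h1.2]
      have hdM0 : 0 ≤ dM := le_of_lt (lt_of_lt_of_le hdm hdmM)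
      -- Frobenius bounds
      obtain ⟨hfW1, hfW2⟩ := frob_bounds (le_of_lt hsm) hsM0 hWb
      obtain ⟨hfΔ1, hfΔ2⟩ := frob_bounds (le_of_lt hdm) hdM0 hΔb
      have hnl : (1 : ℝ) ≤ (n l : ℝ) := by
        have : 0 < n l := Fin.pos_iff_nonempty.mpr ⟨i0⟩
        exact_mod_cast this
      have hfWpos : 0 < frob (W l) := by
        nlinarith [frob_nonneg' (W l)]
      set t : ℝ := frob (ΔW l) / frob (W l) with htdef
      have ht : 0 ≤ t := div_nonneg (frob_nonneg' _) (le_of_lt hfWpos)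
      -- key singular/Frobenius inequality : dM ≤ κ^2 * sm * t
      have hkey : dM ≤ κ ^ 2 * sm * t := by
        rw [htdef, ← mul_div_assoc, le_div_iff₀ hfWpos]
        have hb0 : (0:ℝ) ≤ (n l : ℝ) := by linarith
        have h1 : dM ^ 2 ≤ (κ * dm) ^ 2 := pow_le_pow_left₀ hdM0 hdMκ 2
        have h2 : sM ^ 2 ≤ (κ * sm) ^ 2 := pow_le_pow_left₀ hsM0 hsMκ 2
        have hsq : (dM * frob (W l)) ^ 2 ≤ (κ ^ 2 * sm * frob (ΔW l)) ^ 2 := by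
          calc (dM * frob (W l)) ^ 2 = dM ^ 2 * frob (W l) ^ 2 := by ring
            _ ≤ (κ * dm) ^ 2 * ((n l : ℝ) * sM ^ 2) :=
                mul_le_mul h1 hfW2 (sq_nonneg _) (sq_nonneg _)
            _ ≤ (κ * dm) ^ 2 * ((n l : ℝ) * (κ * sm) ^ 2) :=
                mul_le_mul_of_nonneg_left
                  (mul_le_mul_of_nonneg_left h2 hb0) (sq_nonneg _)
            _ = (κ ^ 2 * sm) ^ 2 * ((n l : ℝ) * dm ^ 2) := by ring
            _ ≤ (κ ^ 2 * sm) ^ 2 * frob (ΔW l) ^ 2 :=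
                mul_le_mul_of_nonneg_left hfΔ1 (sq_nonneg _)
            _ = (κ ^ 2 * sm * frob (ΔW l)) ^ 2 := by ring
        have hl0 : 0 ≤ dM * frob (W l) := mul_nonneg hdM0 hfWpos.le
        have hr0 : 0 ≤ κ ^ 2 * sm * frob (ΔW l) :=
          mul_nonneg (mul_nonneg (sq_nonneg κ) hsm.le) (frob_nonneg' _)
        calc dM * frob (W l) = Real.sqrt ((dM * frob (W l)) ^ 2) :=
              (Real.sqrt_sq hl0).symm
          _ ≤ Real.sqrt ((κ ^ 2 * sm * frob (ΔW l)) ^ 2) := Real.sqrt_le_sqrt hsq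
          _ = κ ^ 2 * sm * frob (ΔW l) := Real.sqrt_sq hr0
      have hsMκ2 : sM ≤ κ ^ 2 * sm := by nlinarith
      -- norms
      set N := vecEnorm (h l) with hN
      set D := vecEnorm (g l - h l) with hDdef
      have hNpos : 0 < N := vecEnorm_pos' hhl
      have hD0 : 0 ≤ D := vecEnorm_nonneg' _
      set u := (W l).mulVec (h l) with hu
      set v := (W l + ΔW l).mulVec (g l) with hv
      have hh1 : h (l + 1) = fun i => φ (u i) := rfl
      have hg1 : g (l + 1) = fun i => φ (v i) := rfl
      -- lower bound on new norm
      have hlow : α * (sm * N) ≤ vecEnorm (h (l + 1)) := by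
        have h1 : α * vecEnorm u ≤ vecEnorm (h (l + 1)) := by
          apply mul_le_vecEnorm hα.le
          intro i
          rw [hh1]
          exact (hφ1 (u i)).1
        have h2 : sm * N ≤ vecEnorm u := (hWb (h l)).1
        calc α * (sm * N) ≤ α * vecEnorm u := mul_le_mul_of_nonneg_left h2 hα.le
          _ ≤ vecEnorm (h (l + 1)) := h1
      have hpos' : 0 < vecEnorm (h (l + 1)) := lt_of_lt_of_le (mul_pos hα (mul_pos hsm hNpos)) hlow
      have hne : h (l + 1) ≠ 0 := by
        intro h0
        rw [h0] at hpos'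
        simp [vecEnorm] at hpos'
      refine ⟨hne, ?_⟩
      -- upper bound pieces
      have hup1 : vecEnorm (g (l + 1) - h (l + 1)) ≤ β * vecEnorm (v - u) := by
        apply vecEnorm_le_mul hβ.le
        intro i
        rw [hg1, hh1]
        simp only [Pi.sub_apply]
        exact (hφ2 (v i) (u i)).2
      have hvu : v - u = (W l + ΔW l).mulVec (g l - h l) + (ΔW l).mulVec (h l) := by
        rw [hv, hu]
        simp only [Matrix.mulVec_sub, Matrix.add_mulVec]
        abel
      have hup2 : vecEnorm (v - u) ≤ (sM * D + dM * D) + dM * N := by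
        rw [hvu]
        refine (vecEnorm_add_le' _ _).trans (add_le_add ?_ (hΔb (h l)).2)
        rw [Matrix.add_mulVec]
        exact (vecEnorm_add_le' _ _).trans (add_le_add (hWb (g l - h l)).2 (hΔb (g l - h l)).2)
      -- scalar facts
      set P : ℝ := ∏ k ∈ Finset.range l, (1 + frob (ΔW k) / frob (W k)) with hPdef
      have hP : 1 ≤ P := by
        rw [hPdef]
        calc (1:ℝ) = ∏ k ∈ Finset.range l, 1 := by simp
          _ ≤ ∏ k ∈ Finset.range l, (1 + frob (ΔW k) / frob (W k)) := by
            apply Finset.prod_le_prod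
            · intro i _; norm_num
            · intro i _
              linarith [div_nonneg (frob_nonneg' (ΔW i)) (frob_nonneg' (W i))]
      have hc1 : (1:ℝ) ≤ c := by
        rw [hcdef, le_div_iff₀ hα]
        nlinarith [hβ, hκ, sq_nonneg (κ - 1)]
      have hc0 : (0:ℝ) ≤ c := by linarith
      have hcl : (1:ℝ) ≤ c ^ l := one_le_pow₀ hc1
      have hβκ : β * κ ^ 2 = c * α := by
        rw [hcdef]; field_simp
      have hcoef : 0 ≤ c ^ (l + 1) * ((1 + t) * P - 1) := by
        have h1 : (1:ℝ) ≤ (1 + t) * P := by nlinarith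
        have h2 : (0:ℝ) ≤ c ^ (l + 1) := pow_nonneg hc0 _
        nlinarith
      rw [Finset.prod_range_succ]
      calc vecEnorm (g (l + 1) - h (l + 1))
          ≤ β * ((sM * D + dM * D) + dM * N) :=
            hup1.trans (mul_le_mul_of_nonneg_left hup2 hβ.le)
        _ ≤ β * ((κ ^ 2 * sm * D + κ ^ 2 * sm * t * D) + κ ^ 2 * sm * t * N) := by
            gcongr
        _ = c * α * sm * ((1 + t) * D + t * N) := by
            rw [show c * α = β * κ ^ 2 from hβκ.symm]; ring
        _ ≤ c * α * sm * ((1 + t) * (c ^ l * (P - 1) * N) + t * N) := by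
            have hca : (0:ℝ) ≤ c * α * sm := mul_nonneg (mul_nonneg hc0 hα.le) hsm.le
            have h1t : (0:ℝ) ≤ 1 + t := by linarith
            gcongr
        _ ≤ c * α * sm * (c ^ l * ((1 + t) * (P - 1) + t) * N) := by
            have hinner : (1 + t) * (c ^ l * (P - 1) * N) + t * N ≤
                c ^ l * ((1 + t) * (P - 1) + t) * N := by
              nlinarith [mul_nonneg (mul_nonneg ht hNpos.le) (sub_nonneg.mpr hcl)]
            have hca : (0:ℝ) ≤ c * α * sm := mul_nonneg (mul_nonneg hc0 hα.le) hsm.le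
            exact mul_le_mul_of_nonneg_left hinner hca
        _ = c ^ (l + 1) * ((1 + t) * P - 1) * (α * (sm * N)) := by
            rw [pow_succ]; ring
        _ ≤ c ^ (l + 1) * ((1 + t) * P - 1) * vecEnorm (h (l + 1)) :=
            mul_le_mul_of_nonneg_left hlow hcoef
        _ = c ^ (l + 1) * (P * (1 + t) - 1) * vecEnorm (h (l + 1)) := by ring
  obtain ⟨-, hb⟩ := key L le_rfl
  rw [div_le_iff₀ (vecEnorm_pos' hfx)]
  calc vecEnorm (g L - h L)
      ≤ c ^ L * ((∏ k ∈ Finset.range L, (1 + frob (ΔW k) / frob (W k))) - 1) *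
        vecEnorm (h L) := hb
    _ = c ^ L * ((∏ k ∈ Finset.range L, (1 + frob (ΔW k) / frob (W k))) - 1) *
        vecEnorm (h L) := by ring
end

section
/- Let f : ℝⁿ → ℝ be continuously differentiable and suppose for all perturbations ΔW with ‖ΔW‖ ≤ η‖W‖ the gradient satisfies ‖∇f(W + ΔW) - ∇f(W)‖ ≤ ((1+η)^L - 1)·‖∇f(W)‖. If ∇f(W) ≠ 0 and (1+η)^L - 1 < 1, then the update W' = W - η·(‖W‖/‖∇f(W)‖)·∇f(W) satisfies f(W') < f(W). -/
open InnerProductSpace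

/-- Single-parameter-group Fromage descent guarantee: if the gradient obeys the deep
relative trust bound within relative radius `η` and `(1+η)^L - 1 < 1`, then the Fromage
update strictly decreases the loss. -/
theorem fromage_descent {m : ℕ} (L : ℕ)
    (f : EuclideanSpace ℝ (Fin m) → ℝ) (hf : ContDiff ℝ 1 f)
    (W : EuclideanSpace ℝ (Fin m)) (η : ℝ) (hη : 0 < η)
    (hW : W ≠ 0) (hg : gradient f W ≠ 0)
    (htrust : ∀ ΔW : EuclideanSpace ℝ (Fin m), ‖ΔW‖ ≤ η * ‖W‖ →
      ‖gradient f (W + ΔW) - gradient f W‖ ≤ ((1 + η) ^ L - 1) * ‖gradient f W‖)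
    (hsmall : (1 + η) ^ L - 1 < 1) :
    f (W - (η * (‖W‖ / ‖gradient f W‖)) • gradient f W) < f W := by
  set g := gradient f W with hgdef
  set c : ℝ := η * (‖W‖ / ‖g‖) with hcdef
  have hgnorm : 0 < ‖g‖ := norm_pos_iff.mpr hg
  have hWnorm : 0 < ‖W‖ := norm_pos_iff.mpr hW
  have hc : 0 < c := by positivity
  set ΔW : EuclideanSpace ℝ (Fin m) := -(c • g) with hΔdef
  have hΔnorm : ‖ΔW‖ = η * ‖W‖ := by
    rw [hΔdef, norm_neg, norm_smul, Real.norm_of_nonneg hc.le, hcdef]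
    field_simp
  have hdiff : ∀ x, DifferentiableAt ℝ f x := fun x => hf.differentiable one_ne_zero x
  set φ : ℝ → ℝ := fun t => f (W + t • ΔW) with hφdef
  have hφderiv : ∀ t : ℝ, HasDerivAt φ (inner ℝ (gradient f (W + t • ΔW)) ΔW) t := by
    intro t
    have hline : HasDerivAt (fun t : ℝ => W + t • ΔW) ΔW t := by
      simpa using ((hasDerivAt_id t).smul_const ΔW).const_add W
    have hgr := (hdiff (W + t • ΔW)).hasGradientAt
    have := hgr.hasFDerivAt.comp_hasDerivAt t hline
    simpa [hφdef, Function.comp_def] using this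
  -- bound derivative on [0,1]
  have hderivneg : ∀ t ∈ Set.Ioo (0:ℝ) 1, deriv φ t < 0 := by
    intro t ht
    rw [(hφderiv t).deriv]
    have hmem : ‖t • ΔW‖ ≤ η * ‖W‖ := by
      rw [norm_smul, Real.norm_of_nonneg ht.1.le, hΔnorm]
      nlinarith [mul_nonneg (sub_nonneg.mpr ht.2.le) (mul_pos hη hWnorm).le]
    have htr := htrust (t • ΔW) hmem
    have hsplit : (inner ℝ (gradient f (W + t • ΔW)) ΔW : ℝ)
        = inner ℝ g ΔW + inner ℝ (gradient f (W + t • ΔW) - g) ΔW := by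
      rw [← inner_add_left]
      congr 1
      abel
    have h1 : (inner ℝ g ΔW : ℝ) = -(c * ‖g‖^2) := by
      rw [hΔdef, inner_neg_right, real_inner_smul_right, real_inner_self_eq_norm_sq]
    have h2 : (inner ℝ (gradient f (W + t • ΔW) - g) ΔW : ℝ)
        ≤ ((1 + η) ^ L - 1) * ‖g‖ * (c * ‖g‖) := by
      calc (inner ℝ (gradient f (W + t • ΔW) - g) ΔW : ℝ)
          ≤ ‖gradient f (W + t • ΔW) - g‖ * ‖ΔW‖ := real_inner_le_norm _ _
        _ ≤ (((1 + η) ^ L - 1) * ‖g‖) * (c * ‖g‖) := by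
            have hε : (0:ℝ) ≤ (1 + η) ^ L - 1 := by
              have : (1:ℝ) ≤ (1 + η) ^ L := one_le_pow₀ (by linarith)
              linarith
            apply mul_le_mul htr ?_ (norm_nonneg _) (by positivity)
            rw [hΔdef, norm_neg, norm_smul, Real.norm_of_nonneg hc.le]
    have hpos : 0 < c * ‖g‖ ^ 2 := by positivity
    have hkey : ((1 + η) ^ L - 1) * ‖g‖ * (c * ‖g‖) < c * ‖g‖ ^ 2 := by
      have h3 : ((1 + η) ^ L - 1) * ‖g‖ * (c * ‖g‖)
          = ((1 + η) ^ L - 1) * (c * ‖g‖ ^ 2) := by ring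
      have h4 := mul_lt_mul_of_pos_right hsmall hpos
      rw [h3]; linarith
    rw [hsplit, h1]
    linarith
  have hcont : ContinuousOn φ (Set.Icc 0 1) :=
    (hf.continuous.comp (by fun_prop)).continuousOn
  have hanti : StrictAntiOn φ (Set.Icc 0 1) := by
    apply strictAntiOn_of_deriv_neg (convex_Icc 0 1) hcont
    intro t ht
    rw [interior_Icc] at ht
    exact hderivneg t ht
  have hφ01 : φ 1 < φ 0 :=
    hanti (Set.mem_Icc.mpr ⟨le_refl 0, zero_le_one⟩) (Set.mem_Icc.mpr ⟨zero_le_one, le_refl 1⟩)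
      zero_lt_one
  have he0 : φ 0 = f W := by simp [hφdef]
  have he1 : φ 1 = f (W - c • g) := by
    simp [hφdef, hΔdef, sub_eq_add_neg]
  rw [← he1, ← he0]
  exact hφ01
end
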